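/- Let n ≥ 2 be an integer, c > 0, and r, σ real numbers with 1 < r < n and 0 < σ < (r−1)c. For δ ∈ (0,1) define the OD-TFT one-shot deviation payoffs: π0C = (r−1)c, π0D(δ) = (1−δ)·((n−1)rc/n + δ²σ) + δ³(r−1)c, π0O(δ) = (1−δ)σ + δ(r−1)c, π1C(δ) = (1−δ)·((rc/n − c) + δσ) + δ²(r−1)c, π1D(δ) = (1−δ)δσ + δ²(r−1)c, π1O(δ) = (1−δ)(1+δ²)σ + δ³(r−1)c. If r > (σ+3c)n/((2n+1)c), then there exists δ₀ ∈ (0,1) such that for all δ ∈ (δ₀,1): π0C ≥ π0D(δ), π0C ≥ π0O(δ), π1D(δ) ≥ π1C(δ), and π1D(δ) ≥ π1O(δ). Conversely, if r < (σ+3c)n/((2n+1)c), then there exists δ₀ ∈ (0,1) such that for all δ ∈ (δ₀,1): π0C < π0D(δ). -/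

import Mathlib

/-- If a continuous function is positive at 1, it is positive on some
interval `(δ₀, 1)` with `δ₀ ∈ (0,1)`. -/
lemma ODTFT_near_one {g : ℝ → ℝ} (hg : Continuous g) (h1 : 0 < g 1) :
    ∃ δ₀ ∈ Set.Ioo (0 : ℝ) 1, ∀ δ ∈ Set.Ioo δ₀ 1, 0 < g δ := by
  have hopen : {x : ℝ | 0 < g x} ∈ nhds (1 : ℝ) :=
    (isOpen_lt continuous_const hg).mem_nhds h1
  have hmem : {x : ℝ | 0 < g x} ∈ nhdsWithin (1 : ℝ) (Set.Iio 1) :=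
    nhdsWithin_le_nhds hopen
  rw [mem_nhdsLT_iff_exists_Ioo_subset] at hmem
  obtain ⟨l, hl, hsub⟩ := hmem
  refine ⟨max l (1/2), ⟨by positivity, ?_⟩, ?_⟩
  · exact max_lt hl (by norm_num)
  · intro δ hδ
    exact hsub ⟨lt_of_le_of_lt (le_max_left _ _) hδ.1, hδ.2⟩

theorem ODTFT_one_shot_deviation (n : ℕ) (hn : 2 ≤ n) (c r σ : ℝ)
    (hc : 0 < c) (hr1 : 1 < r) (hrn : r < (n : ℝ))
    (hσ0 : 0 < σ) (hσ : σ < (r - 1) * c) :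
    (r > (σ + 3 * c) * n / ((2 * n + 1) * c) →
      ∃ δ₀ ∈ Set.Ioo (0 : ℝ) 1, ∀ δ ∈ Set.Ioo δ₀ 1,
        (r - 1) * c ≥ (1 - δ) * (((n : ℝ) - 1) * r * c / n + δ ^ 2 * σ)
            + δ ^ 3 * (r - 1) * c ∧
        (r - 1) * c ≥ (1 - δ) * σ + δ * (r - 1) * c ∧
        (1 - δ) * δ * σ + δ ^ 2 * (r - 1) * c ≥
          (1 - δ) * ((r * c / n - c) + δ * σ) + δ ^ 2 * (r - 1) * c ∧
        (1 - δ) * δ * σ + δ ^ 2 * (r - 1) * c ≥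
          (1 - δ) * (1 + δ ^ 2) * σ + δ ^ 3 * (r - 1) * c) ∧
    (r < (σ + 3 * c) * n / ((2 * n + 1) * c) →
      ∃ δ₀ ∈ Set.Ioo (0 : ℝ) 1, ∀ δ ∈ Set.Ioo δ₀ 1,
        (r - 1) * c < (1 - δ) * (((n : ℝ) - 1) * r * c / n + δ ^ 2 * σ)
            + δ ^ 3 * (r - 1) * c) := by
  have hn0 : (0 : ℝ) < n := by positivity
  have hden : (0 : ℝ) < (2 * n + 1) * c := by positivity
  have hrcn : r * c / n < c := by
    rw [div_lt_iff₀ hn0]; nlinarith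
  set g : ℝ → ℝ := fun δ =>
    (1 + δ + δ ^ 2) * ((r - 1) * c) - (((n : ℝ) - 1) * r * c / n + δ ^ 2 * σ)
    with hg_def
  set h : ℝ → ℝ := fun δ => δ ^ 2 * ((r - 1) * c) - (1 - δ + δ ^ 2) * σ
    with hh_def
  have hgc : Continuous g := by fun_prop
  have hhc : Continuous h := by fun_prop
  have hdivn : ((n : ℝ) - 1) * r * c / n * n = ((n : ℝ) - 1) * r * c := by
    field_simp
  constructor
  · intro hcond
    have hcond' : (σ + 3 * c) * n < r * ((2 * n + 1) * c) :=
      (div_lt_iff₀ hden).1 hcond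
    have hg1 : 0 < g 1 := by
      have : 0 < (g 1) * n := by
        simp only [hg_def]
        nlinarith [hdivn]
      nlinarith
    have hh1 : 0 < h 1 := by
      simp only [hh_def]; nlinarith
    obtain ⟨δ₁, hδ₁, hP₁⟩ := ODTFT_near_one hgc hg1
    obtain ⟨δ₂, hδ₂, hP₂⟩ := ODTFT_near_one hhc hh1
    refine ⟨max δ₁ δ₂, ⟨lt_max_of_lt_left hδ₁.1, max_lt hδ₁.2 hδ₂.2⟩, ?_⟩
    intro δ hδ
    have h1δ : 0 < 1 - δ := by linarith [hδ.2]
    have hgδ : 0 < g δ := hP₁ δ ⟨lt_of_le_of_lt (le_max_left _ _) hδ.1, hδ.2⟩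
    have hhδ : 0 < h δ := hP₂ δ ⟨lt_of_le_of_lt (le_max_right _ _) hδ.1, hδ.2⟩
    have hgδ' : 0 < (1 + δ + δ ^ 2) * ((r - 1) * c)
        - (((n : ℝ) - 1) * r * c / n + δ ^ 2 * σ) := hgδ
    have hhδ' : 0 < δ ^ 2 * ((r - 1) * c) - (1 - δ + δ ^ 2) * σ := hhδ
    refine ⟨?_, ?_, ?_, ?_⟩
    · have key : (1 - δ) * ((1 + δ + δ ^ 2) * ((r - 1) * c)
          - (((n : ℝ) - 1) * r * c / n + δ ^ 2 * σ)) =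
          (r - 1) * c - ((1 - δ) * (((n : ℝ) - 1) * r * c / n + δ ^ 2 * σ)
            + δ ^ 3 * (r - 1) * c) := by ring
      linarith [mul_pos h1δ hgδ']
    · nlinarith [mul_pos h1δ (show (0:ℝ) < (r - 1) * c - σ by linarith)]
    · nlinarith [mul_pos h1δ (show (0:ℝ) < c - r * c / n by linarith)]
    · have key : (1 - δ) * (δ ^ 2 * ((r - 1) * c) - (1 - δ + δ ^ 2) * σ) =
          ((1 - δ) * δ * σ + δ ^ 2 * (r - 1) * c) -
            ((1 - δ) * (1 + δ ^ 2) * σ + δ ^ 3 * (r - 1) * c) := by ring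
      linarith [mul_pos h1δ hhδ']
  · intro hcond
    have hcond' : r * ((2 * n + 1) * c) < (σ + 3 * c) * n :=
      (lt_div_iff₀ hden).1 hcond
    set g2 : ℝ → ℝ := fun δ => -g δ with hg2_def
    have hg2c : Continuous g2 := by fun_prop
    have hg1 : 0 < g2 1 := by
      have : 0 < (g2 1) * n := by
        simp only [hg2_def, hg_def]
        nlinarith [hdivn]
      nlinarith
    obtain ⟨δ₁, hδ₁, hP₁⟩ := ODTFT_near_one hg2c hg1
    refine ⟨δ₁, hδ₁, ?_⟩
    intro δ hδ
    have h1δ : 0 < 1 - δ := by linarith [hδ.2]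
    have hgδ : 0 < g2 δ := hP₁ δ hδ
    have hgδ' : 0 < (((n : ℝ) - 1) * r * c / n + δ ^ 2 * σ)
        - (1 + δ + δ ^ 2) * ((r - 1) * c) := by
      have : g2 δ = -(g δ) := rfl
      simp only [hg2_def, hg_def] at hgδ; linarith
    have key : (1 - δ) * ((((n : ℝ) - 1) * r * c / n + δ ^ 2 * σ)
        - (1 + δ + δ ^ 2) * ((r - 1) * c)) =
        ((1 - δ) * (((n : ℝ) - 1) * r * c / n + δ ^ 2 * σ)
          + δ ^ 3 * (r - 1) * c) - (r - 1) * c := by ring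
    linarith [mul_pos h1δ hgδ']
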